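/- For |q|<1, ψ(q) = f(q³,q⁶) + q·ψ(q⁹), where ψ(q) = ∑_{n∈ℤ} q^{2n²-n} and f(a,b) = ∑_{n∈ℤ} a^{n(n+1)/2} b^{n(n-1)/2}. -/

import Mathlib

open scoped BigOperators

noncomputable def E (q : ℂ) : ℂ := ∏' n : ℕ, (1 - q ^ (n + 1))

noncomputable def ramaf (a b : ℂ) : ℂ :=
  ∑' n : ℤ, a ^ (n * (n + 1) / 2) * b ^ (n * (n - 1) / 2)

noncomputable def phi (q : ℂ) : ℂ := ∑' n : ℤ, q ^ (n ^ 2)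

noncomputable def psi (q : ℂ) : ℂ := ∑' n : ℤ, q ^ (2 * n ^ 2 - n)

/-- value of the reindexing map on the `f(q³,q⁶)` part -/
def gval (k : ℤ) : ℤ := if k % 2 = 0 then 3 * (k / 2) else (1 - 3 * k) / 2

/-- `ℤ ≃ {n | n % 3 ≠ 1}` -/
def e1 : ℤ ≃ ↥({n : ℤ | n % 3 = 1}ᶜ) where
  toFun k := ⟨gval k, by
    simp only [Set.mem_compl_iff, Set.mem_setOf_eq, gval]
    split_ifs <;> omega⟩
  invFun x := if (x : ℤ) % 3 = 0 then 2 * ((x : ℤ) / 3) else (1 - 2 * (x : ℤ)) / 3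
  left_inv k := by
    simp only [gval]
    split_ifs <;> omega
  right_inv x := by
    obtain ⟨n, hn⟩ := x
    simp only [Set.mem_compl_iff, Set.mem_setOf_eq] at hn
    apply Subtype.ext
    simp only [gval]
    split_ifs <;> omega

/-- `ℤ ≃ {n | n % 3 = 1}` -/
def e2 : ℤ ≃ ↥({n : ℤ | n % 3 = 1}) where
  toFun m := ⟨1 - 3 * m, by simp only [Set.mem_setOf_eq]; omega⟩
  invFun x := (1 - (x : ℤ)) / 3
  left_inv m := by
    show (1 - (1 - 3 * m)) / 3 = m
    omega
  right_inv x := by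
    obtain ⟨n, hn⟩ := x
    simp only [Set.mem_setOf_eq] at hn
    apply Subtype.ext
    simp only
    omega

lemma summable_psi_terms (q : ℂ) (hq : ‖q‖ < 1) :
    Summable (fun n : ℤ => q ^ (2 * n ^ 2 - n)) := by
  apply Summable.of_norm_bounded (g := fun n : ℤ => ‖q‖ ^ n.natAbs)
  · apply Summable.of_nat_of_neg <;>
      simpa using summable_geometric_of_lt_one (norm_nonneg q) hq
  · intro n
    have he : (0 : ℤ) ≤ 2 * n ^ 2 - n := by nlinarith [sq_nonneg n, sq_nonneg (n - 1)]
    have h1 : (n.natAbs : ℤ) ≤ 2 * n ^ 2 - n := by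
      rcases le_or_gt 0 n with h | h
      · rw [Int.natAbs_of_nonneg h]; nlinarith
      · have hn : (n.natAbs : ℤ) = -n := by omega
        rw [hn]; nlinarith
    have h2 : q ^ (2 * n ^ 2 - n) = q ^ (2 * n ^ 2 - n).toNat := by
      rw [← zpow_natCast, Int.toNat_of_nonneg he]
    rw [h2, norm_pow]
    exact pow_le_pow_of_le_one (norm_nonneg q) hq.le ((Int.le_toNat he).mpr h1)

theorem psi_three_dissection (q : ℂ) (hq : ‖q‖ < 1) :
    psi q = ramaf (q ^ 3) (q ^ 6) + q * psi (q ^ 9) := by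
  by_cases hq0 : q = 0
  · subst hq0
    have hps : psi 0 = 1 := by
      rw [psi]
      rw [tsum_eq_single (0 : ℤ)]
      · norm_num
      · intro b hb
        have hbe : 2 * b ^ 2 - b ≠ 0 := by
          rcases lt_trichotomy b 0 with h | h | h
          · nlinarith
          · exact absurd h hb
          · nlinarith
        exact zero_zpow _ hbe
    have h3 : (0 : ℂ) ^ 3 = 0 := by norm_num
    have h6 : (0 : ℂ) ^ 6 = 0 := by norm_num
    have h9 : (0 : ℂ) ^ 9 = 0 := by norm_num
    rw [h3, h6, h9, hps]
    have hra : ramaf 0 0 = 1 := by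
      rw [ramaf]
      rw [tsum_eq_single (0 : ℤ)]
      · norm_num
      · intro k hk
        rcases lt_trichotomy k 0 with h | h | h
        · have hb : 2 ≤ k * (k - 1) := by nlinarith
          have hbne : k * (k - 1) / 2 ≠ 0 := by
            set P := k * (k - 1) with hP
            omega
          rw [zero_zpow _ hbne, mul_zero]
        · exact absurd h hk
        · have ha : 2 ≤ k * (k + 1) := by nlinarith
          have hane : k * (k + 1) / 2 ≠ 0 := by
            set P := k * (k + 1) with hP
            omega
          rw [zero_zpow _ hane, zero_mul]
    rw [hra]
    ring
  · have hsum := summable_psi_terms q hq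
    set s : Set ℤ := {n : ℤ | n % 3 = 1} with hs
    have hsplit := Summable.tsum_subtype_add_tsum_subtype_compl hsum s
    have hz3 : (q ^ 3 : ℂ) = q ^ ((3 : ℤ)) := by
      rw [← zpow_natCast]; norm_num
    have hz6 : (q ^ 6 : ℂ) = q ^ ((6 : ℤ)) := by
      rw [← zpow_natCast]; norm_num
    have hz9 : (q ^ 9 : ℂ) = q ^ ((9 : ℤ)) := by
      rw [← zpow_natCast]; norm_num
    have h1 : (∑' x : ↥sᶜ, q ^ (2 * (x : ℤ) ^ 2 - (x : ℤ))) = ramaf (q ^ 3) (q ^ 6) := by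
      rw [← Equiv.tsum_eq e1 (fun x : ↥sᶜ => q ^ (2 * (x : ℤ) ^ 2 - (x : ℤ))), ramaf]
      apply tsum_congr
      intro k
      have hcoe : ((e1 k : ℤ)) = gval k := rfl
      simp only [hcoe]
      rcases Int.even_or_odd k with ⟨m, rfl⟩ | ⟨m, rfl⟩
      · have hg : gval (m + m) = 3 * m := by
          simp only [gval]
          rw [if_pos (by omega)]
          omega
        have ha : (m + m) * ((m + m) + 1) / 2 = m * (2 * m + 1) := by
          have h : (m + m) * ((m + m) + 1) = 2 * (m * (2 * m + 1)) := by ring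
          rw [h, Int.mul_ediv_cancel_left _ two_ne_zero]
        have hb : (m + m) * ((m + m) - 1) / 2 = m * (2 * m - 1) := by
          have h : (m + m) * ((m + m) - 1) = 2 * (m * (2 * m - 1)) := by ring
          rw [h, Int.mul_ediv_cancel_left _ two_ne_zero]
        rw [hg, ha, hb, hz3, hz6, ← zpow_mul, ← zpow_mul, ← zpow_add₀ hq0]
        congr 1
        ring
      · have hg : gval (2 * m + 1) = -3 * m - 1 := by
          simp only [gval]
          rw [if_neg (by omega)]
          omega
        have ha : (2 * m + 1) * ((2 * m + 1) + 1) / 2 = (2 * m + 1) * (m + 1) := by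
          have h : (2 * m + 1) * ((2 * m + 1) + 1) = 2 * ((2 * m + 1) * (m + 1)) := by ring
          rw [h, Int.mul_ediv_cancel_left _ two_ne_zero]
        have hb : (2 * m + 1) * ((2 * m + 1) - 1) / 2 = (2 * m + 1) * m := by
          have h : (2 * m + 1) * ((2 * m + 1) - 1) = 2 * ((2 * m + 1) * m) := by ring
          rw [h, Int.mul_ediv_cancel_left _ two_ne_zero]
        rw [hg, ha, hb, hz3, hz6, ← zpow_mul, ← zpow_mul, ← zpow_add₀ hq0]
        congr 1
        ring
    have h2 : (∑' x : ↥s, q ^ (2 * (x : ℤ) ^ 2 - (x : ℤ))) = q * psi (q ^ 9) := by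
      rw [← Equiv.tsum_eq e2 (fun x : ↥s => q ^ (2 * (x : ℤ) ^ 2 - (x : ℤ))), psi,
        ← tsum_mul_left]
      apply tsum_congr
      intro m
      have hcoe : ((e2 m : ℤ)) = 1 - 3 * m := rfl
      simp only [hcoe]
      rw [hz9, ← zpow_mul]
      nth_rewrite 2 [show q = q ^ ((1 : ℤ)) from (zpow_one q).symm]
      rw [← zpow_add₀ hq0]
      congr 1
      ring
    rw [psi, ← hsplit, h1, h2]
    ring
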